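/- The set of divisors of the Coxeter element (1 2 ... n) in S_n under the reflection-length partial order, ordered by σ ≼ τ iff ℓ(σ) + ℓ(σ⁻¹τ) = ℓ(τ), forms a lattice (isomorphic to the lattice of non-crossing partitions of n). -/

import Mathlib

/-- Reflection length in the symmetric group: minimal number of transpositions. -/
noncomputable def reflectionLength {n : ℕ} (σ : Equiv.Perm (Fin n)) : ℕ :=
  sInf {k | ∃ l : List (Equiv.Perm (Fin n)),
    (∀ τ ∈ l, τ.IsSwap) ∧ l.length = k ∧ l.prod = σ}

/-- The reflection-length (absolute) order on `S_n`. -/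
def absLe {n : ℕ} (σ τ : Equiv.Perm (Fin n)) : Prop :=
  reflectionLength σ + reflectionLength (σ⁻¹ * τ) = reflectionLength τ

/-- The set of divisors of the Coxeter element `(1 2 … n)`. -/
def coxeterDivisors (n : ℕ) : Set (Equiv.Perm (Fin n)) :=
  {σ | absLe σ (finRotate n)}

namespace NCL
open Equiv Equiv.Perm Finset

variable {n : ℕ} {σ τ : Equiv.Perm (Fin n)} {a b x y : Fin n}

/-- The orbit setoid of a permutation. -/
def orbS (σ : Equiv.Perm (Fin n)) : Setoid (Fin n) :=
  ⟨σ.SameCycle, ⟨fun x => SameCycle.refl σ x, SameCycle.symm, SameCycle.trans⟩⟩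

lemma orbS_r : (orbS σ).r x y ↔ σ.SameCycle x y := Iff.rfl

/-- Number of orbits. -/
noncomputable def cc (σ : Equiv.Perm (Fin n)) : ℕ := Nat.card (Quotient (orbS σ))

lemma sc_pow (i : ℕ) : σ.SameCycle x ((σ ^ i) x) := ⟨(i : ℤ), by simp [zpow_natCast]⟩

lemma sc_iff_nat : σ.SameCycle x y ↔ ∃ i : ℕ, (σ ^ i) x = y := by
  constructor
  · intro h
    obtain ⟨i, _, hi⟩ := h.exists_pow_eq'
    exact ⟨i, hi⟩
  · rintro ⟨i, rfl⟩; exact sc_pow i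

/-- Merge the classes of `a` and `b` in a setoid. -/
def mg (Q : Setoid (Fin n)) (a b : Fin n) : Setoid (Fin n) where
  r x y := Q.r x y ∨ (Q.r x a ∧ Q.r b y) ∨ (Q.r x b ∧ Q.r a y)
  iseqv := by
    constructor
    · intro x; exact Or.inl (Q.refl x)
    · rintro x y (h | ⟨h1, h2⟩ | ⟨h1, h2⟩)
      · exact Or.inl (Q.symm h)
      · exact Or.inr (Or.inr ⟨Q.symm h2, Q.symm h1⟩)
      · exact Or.inr (Or.inl ⟨Q.symm h2, Q.symm h1⟩)
    · rintro x y z (h | ⟨h1, h2⟩ | ⟨h1, h2⟩) (h' | ⟨h1', h2'⟩ | ⟨h1', h2'⟩)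
      · exact Or.inl (Q.trans h h')
      · exact Or.inr (Or.inl ⟨Q.trans h h1', h2'⟩)
      · exact Or.inr (Or.inr ⟨Q.trans h h1', h2'⟩)
      · exact Or.inr (Or.inl ⟨h1, Q.trans h2 h'⟩)
      · exact Or.inl (Q.trans h1 (Q.trans (Q.symm h1') (Q.trans (Q.symm h2) h2')))
      · exact Or.inl (Q.trans h1 h2')
      · exact Or.inr (Or.inr ⟨h1, Q.trans h2 h'⟩)
      · exact Or.inl (Q.trans h1 h2')
      · exact Or.inr (Or.inr ⟨h1, h2'⟩)

lemma mg_rel_of_rel {Q : Setoid (Fin n)} (h : Q.r x y) : (mg Q a b).r x y := Or.inl h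

lemma mg_eq_self {Q : Setoid (Fin n)} (hab : Q.r a b) : mg Q a b = Q := by
  ext x y
  constructor
  · rintro (h | ⟨h1, h2⟩ | ⟨h1, h2⟩)
    · exact h
    · exact Q.trans (Q.trans h1 hab) h2
    · exact Q.trans (Q.trans h1 (Q.symm hab)) h2
  · exact Or.inl

lemma card_mg {Q : Setoid (Fin n)} (hab : ¬ Q.r a b) :
    Nat.card (Quotient (mg Q a b)) + 1 = Nat.card (Quotient Q) := by
  classical
  -- bijection from Quotient (mg Q a b) to {q : Quotient Q // q ≠ ⟦b⟧}
  have hG : ∀ x y : Fin n, (mg Q a b).r x y →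
      (if Q.r b x then Quotient.mk Q a else Quotient.mk Q x)
      = (if Q.r b y then Quotient.mk Q a else Quotient.mk Q y) := by
    rintro x y (h | ⟨h1, h2⟩ | ⟨h1, h2⟩)
    · by_cases hx : Q.r b x
      · rw [if_pos hx, if_pos (show Q.r b y from Q.trans hx h)]
      · rw [if_neg hx, if_neg (show ¬ Q.r b y from fun hy => hx (Q.trans hy (Q.symm h)))]
        exact Quotient.sound h
      -- Q.r x a ∧ Q.r b y
    · rw [if_neg (show ¬ Q.r b x from fun hx => hab (Q.symm (Q.trans hx h1))), if_pos h2]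
      exact Quotient.sound h1
    · rw [if_pos (show Q.r b x from Q.symm h1), if_neg (show ¬ Q.r b y from fun hy => hab (Q.trans h2 (Q.symm hy)))]
      exact (Quotient.sound h2)
  let G : Quotient (mg Q a b) → Quotient Q :=
    Quotient.lift (fun x => if Q.r b x then Quotient.mk Q a else Quotient.mk Q x) hG
  have hne : ∀ q, G q ≠ Quotient.mk Q b := by
    intro q
    induction q using Quotient.ind with
    | _ x =>
      show (if Q.r b x then Quotient.mk Q a else Quotient.mk Q x) ≠ _
      by_cases hx : Q.r b x
      · rw [if_pos hx]
        intro h; exact hab (Quotient.exact h)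
      · rw [if_neg hx]
        intro h; exact hx (Q.symm (Quotient.exact h))
  let G' : Quotient (mg Q a b) → {q : Quotient Q // q ≠ Quotient.mk Q b} :=
    fun q => ⟨G q, hne q⟩
  have hbij : Function.Bijective G' := by
    constructor
    · intro q1 q2 h
      induction q1 using Quotient.ind with
      | _ x =>
      induction q2 using Quotient.ind with
      | _ y =>
      have h' : (if Q.r b x then Quotient.mk Q a else Quotient.mk Q x)
          = (if Q.r b y then Quotient.mk Q a else Quotient.mk Q y) := congrArg Subtype.val h
      apply Quotient.sound
      by_cases hx : Q.r b x <;> by_cases hy : Q.r b y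
      · exact Or.inl (Q.trans (Q.symm hx) hy)
      · rw [if_pos hx, if_neg hy] at h'
        exact Or.inr (Or.inr ⟨Q.symm hx, Quotient.exact h'⟩)
      · rw [if_neg hx, if_pos hy] at h'
        exact Or.inr (Or.inl ⟨Quotient.exact h', hy⟩)
      · rw [if_neg hx, if_neg hy] at h'
        exact Or.inl (Quotient.exact h')
    · rintro ⟨q, hq⟩
      induction q using Quotient.ind with
      | _ x =>
        refine ⟨Quotient.mk _ x, ?_⟩
        have hx' : ¬ Q.r b x := fun h => hq (Quotient.sound (Q.symm h))
        apply Subtype.ext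
        show (if Q.r b x then Quotient.mk Q a else Quotient.mk Q x) = _
        rw [if_neg hx']
  have h1 := Nat.card_eq_of_bijective G' hbij
  classical
  have hT : Fintype (Quotient Q) := Fintype.ofFinite _
  rw [h1]
  rw [Nat.card_eq_fintype_card (α := Quotient Q), Nat.card_eq_fintype_card]
  have h2 := Fintype.card_subtype_compl (fun q : Quotient Q => q = Quotient.mk Q b)
  have h3 : Fintype.card {q : Quotient Q // q = Quotient.mk Q b} = 1 :=
    Fintype.card_subtype_eq _
  have h4 : 1 ≤ Fintype.card (Quotient Q) :=
    Fintype.card_pos_iff.mpr ⟨Quotient.mk Q b⟩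
  have h5 : Fintype.card {q : Quotient Q // ¬ q = Quotient.mk Q b}
      = Fintype.card {q : Quotient Q // q ≠ Quotient.mk Q b} := rfl
  omega


lemma swap_mul_step (σ : Equiv.Perm (Fin n)) (a b z : Fin n) :
    (mg (orbS (Equiv.swap a b * σ)) a b).r z (σ z) := by
  set τ := Equiv.swap a b * σ with hτ
  have hz : σ z = Equiv.swap a b (τ z) := by
    simp [hτ, Equiv.Perm.mul_apply, Equiv.swap_apply_self]
  have hzτ : τ.SameCycle z (τ z) := sameCycle_apply_right.mpr (SameCycle.refl τ z)
  by_cases h1 : τ z = a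
  · have hb : σ z = b := by rw [hz, h1, Equiv.swap_apply_left]
    rw [hb]
    exact Or.inr (Or.inl ⟨h1 ▸ hzτ, SameCycle.refl τ b⟩)
  · by_cases h2 : τ z = b
    · have ha : σ z = a := by rw [hz, h2, Equiv.swap_apply_right]
      rw [ha]
      exact Or.inr (Or.inr ⟨h2 ▸ hzτ, SameCycle.refl τ a⟩)
    · have : σ z = τ z := by rw [hz, Equiv.swap_apply_of_ne_of_ne h1 h2]
      rw [this]
      exact Or.inl hzτ

lemma mg_of_sameCycle (h : σ.SameCycle x y) :
    (mg (orbS (Equiv.swap a b * σ)) a b).r x y := by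
  rw [sc_iff_nat] at h
  obtain ⟨i, rfl⟩ := h
  induction i with
  | zero => exact (mg _ a b).refl x
  | succ k ih =>
    rw [pow_succ', Equiv.Perm.mul_apply]
    exact (mg _ a b).trans ih (swap_mul_step σ a b _)

lemma mg_le_mg_swap (x y : Fin n) (h : (mg (orbS σ) a b).r x y) :
    (mg (orbS (Equiv.swap a b * σ)) a b).r x y := by
  rcases h with h | ⟨h1, h2⟩ | ⟨h1, h2⟩
  · exact mg_of_sameCycle h
  · exact (mg _ a b).trans (mg_of_sameCycle h1) ((mg _ a b).trans
      (Or.inr (Or.inl ⟨SameCycle.refl _ a, SameCycle.refl _ b⟩)) (mg_of_sameCycle h2))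
  · exact (mg _ a b).trans (mg_of_sameCycle h1) ((mg _ a b).trans
      (Or.inr (Or.inr ⟨SameCycle.refl _ b, SameCycle.refl _ a⟩)) (mg_of_sameCycle h2))

lemma mg_orbS_swap_mul (σ : Equiv.Perm (Fin n)) (a b : Fin n) :
    mg (orbS σ) a b = mg (orbS (Equiv.swap a b * σ)) a b := by
  apply Setoid.ext; intro x y
  constructor
  · exact mg_le_mg_swap x y
  · intro h
    have := mg_le_mg_swap (σ := Equiv.swap a b * σ) (a := a) (b := b) x y h
    rwa [Equiv.swap_mul_self_mul] at this

lemma sameCycle_swap_mul_of_not (hab : a ≠ b) (h : ¬ σ.SameCycle a b) :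
    (Equiv.swap a b * σ).SameCycle a b := by
  set τ := Equiv.swap a b * σ with hτ
  have hstep : ∀ z : Fin n, σ z ≠ a → σ z ≠ b → τ z = σ z := by
    intro z h1 h2
    show Equiv.swap a b (σ z) = σ z
    exact Equiv.swap_apply_of_ne_of_ne h1 h2
  have key : ∀ i : ℕ, (∀ j : ℕ, j < i → (σ ^ (j+1)) a ≠ a) → τ.SameCycle a ((σ ^ i) a) := by
    intro i
    induction i with
    | zero => exact fun _ => SameCycle.refl _ _
    | succ k ih =>
      intro hj
      have h1 : τ.SameCycle a ((σ ^ k) a) := ih (fun j hjk => hj j (Nat.lt_succ_of_lt hjk))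
      have hne1 : (σ ^ (k+1)) a ≠ a := hj k (Nat.lt_succ_self k)
      have hne2 : (σ ^ (k+1)) a ≠ b := fun hb => h (hb ▸ sc_pow (k+1))
      have h2 : τ ((σ ^ k) a) = (σ ^ (k+1)) a := by
        have hp : σ ((σ ^ k) a) = (σ ^ (k+1)) a := by rw [pow_succ', Equiv.Perm.mul_apply]
        have := hstep ((σ ^ k) a) (hp ▸ hne1) (hp ▸ hne2)
        rw [this, hp]
      exact h2 ▸ (sameCycle_apply_right.mpr h1)
  have hex : ∃ j : ℕ, 0 < j ∧ (σ ^ j) a = a :=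
    ⟨orderOf σ, orderOf_pos σ, by rw [pow_orderOf_eq_one]; rfl⟩
  set p := Nat.find hex with hp
  obtain ⟨hp1, hp2⟩ := Nat.find_spec hex
  rw [← hp] at hp1 hp2
  rcases Nat.lt_or_ge 1 p with hgt | hle
  · -- p ≥ 2
    have hlast : τ.SameCycle a ((σ ^ (p-1)) a) := by
      apply key
      intro j hj
      intro hc
      exact (Nat.find_min hex (by omega : j + 1 < p)) ⟨Nat.succ_pos j, hc⟩
    have : τ ((σ ^ (p-1)) a) = b := by
      have hpow : σ ((σ ^ (p-1)) a) = a := by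
        have : (σ ^ p) a = a := hp2
        rw [show p = (p-1) + 1 by omega, pow_succ', Equiv.Perm.mul_apply] at this
        exact this
      show Equiv.swap a b (σ ((σ ^ (p-1)) a)) = b
      rw [hpow, Equiv.swap_apply_left]
    exact this ▸ (sameCycle_apply_right.mpr hlast)
  · -- p = 1 : σ a = a
    have hp1' : p = 1 := by omega
    have hfix : σ a = a := by rw [hp1'] at hp2; simpa using hp2
    have : τ a = b := by
      show Equiv.swap a b (σ a) = b
      rw [hfix, Equiv.swap_apply_left]
    exact this ▸ (sameCycle_apply_right.mpr (SameCycle.refl τ a))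

lemma not_sameCycle_swap_mul (hab : a ≠ b) (h : σ.SameCycle a b) :
    ¬ (Equiv.swap a b * σ).SameCycle a b := by
  intro hτc
  set τ := Equiv.swap a b * σ with hτ
  have hστ : ∀ z : Fin n, σ z = Equiv.swap a b (τ z) := by
    intro z; simp [hτ, Equiv.Perm.mul_apply, Equiv.swap_apply_self]
  have hex : ∃ j : ℕ, (τ ^ j) a = b ∧ 0 < j := by
    obtain ⟨i, hi⟩ := sc_iff_nat.mp hτc
    rcases Nat.eq_zero_or_pos i with h0 | h0
    · exfalso; apply hab; rw [h0] at hi; simpa using hi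
    · exact ⟨i, hi, h0⟩
  set j := Nat.find hex with hj
  obtain ⟨hj1, hj2⟩ := Nat.find_spec hex
  rw [← hj] at hj1 hj2
  have hS : ∀ i : ℕ, ∃ m : ℕ, m < j ∧ (σ ^ i) a = (τ ^ m) a := by
    intro i
    induction i with
    | zero => exact ⟨0, hj2, rfl⟩
    | succ k ih =>
      obtain ⟨m, hm, hmk⟩ := ih
      have hσk : (σ ^ (k+1)) a = Equiv.swap a b ((τ ^ (m+1)) a) := by
        have e1 : (σ ^ (k+1)) a = σ ((σ ^ k) a) := by rw [pow_succ', Equiv.Perm.mul_apply]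
        have e2 : (τ ^ (m+1)) a = τ ((τ ^ m) a) := by rw [pow_succ', Equiv.Perm.mul_apply]
        rw [e1, e2, hmk]
        exact hστ _
      rcases Nat.lt_or_ge (m+1) j with hlt | hge
      · -- τ^(m+1) a ≠ a and ≠ b
        have hneb : (τ ^ (m+1)) a ≠ b := fun hc => (Nat.find_min hex hlt) ⟨hc, Nat.succ_pos m⟩
        have hnea : (τ ^ (m+1)) a ≠ a := by
          intro hc
          have : (τ ^ (j - (m+1) + (m+1))) a = b := by
            rw [show j - (m+1) + (m+1) = j by omega]; exact hj1
          rw [pow_add, Equiv.Perm.mul_apply, hc] at this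
          exact (Nat.find_min hex (by omega : j - (m+1) < j)) ⟨this, by omega⟩
        refine ⟨m+1, hlt, ?_⟩
        rw [hσk, Equiv.swap_apply_of_ne_of_ne hnea hneb]
      · -- m + 1 = j
        have hmj : m + 1 = j := by omega
        refine ⟨0, hj2, ?_⟩
        rw [hσk, hmj, hj1, Equiv.swap_apply_right]
        rfl
  obtain ⟨i, hi⟩ := sc_iff_nat.mp h
  obtain ⟨m, hm, hmk⟩ := hS i
  rw [hi] at hmk
  rcases Nat.eq_zero_or_pos m with h0 | h0
  · apply hab; rw [h0] at hmk; exact (by simpa using hmk : b = a).symm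
  · exact (Nat.find_min hex (hj ▸ hm)) ⟨hmk.symm, h0⟩

lemma orbS_swap_mul_merge (hab : a ≠ b) (h : ¬ σ.SameCycle a b) :
    orbS (Equiv.swap a b * σ) = mg (orbS σ) a b := by
  rw [mg_orbS_swap_mul σ a b]
  exact (mg_eq_self (sameCycle_swap_mul_of_not hab h)).symm

lemma cc_swap_mul_merge (hab : a ≠ b) (h : ¬ σ.SameCycle a b) :
    cc (Equiv.swap a b * σ) + 1 = cc σ := by
  unfold cc
  rw [orbS_swap_mul_merge hab h]
  exact card_mg h

lemma sameCycle_of_swap_mul_merge (hab : a ≠ b) (h : ¬ σ.SameCycle a b)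
    (hxy : σ.SameCycle x y) : (Equiv.swap a b * σ).SameCycle x y := by
  have heq := orbS_swap_mul_merge hab h
  have : (orbS (Equiv.swap a b * σ)).r x y := by rw [heq]; exact Or.inl hxy
  exact this

lemma cc_swap_mul_split (hab : a ≠ b) (h : σ.SameCycle a b) :
    cc σ + 1 = cc (Equiv.swap a b * σ) := by
  have h4 := not_sameCycle_swap_mul hab h
  have heq := orbS_swap_mul_merge (σ := Equiv.swap a b * σ) hab h4
  rw [Equiv.swap_mul_self_mul] at heq
  unfold cc
  rw [heq]
  exact card_mg h4

lemma sameCycle_of_swap_mul_split (hab : a ≠ b) (h : σ.SameCycle a b)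
    (hxy : (Equiv.swap a b * σ).SameCycle x y) : σ.SameCycle x y := by
  have h4 := not_sameCycle_swap_mul hab h
  have heq := orbS_swap_mul_merge (σ := Equiv.swap a b * σ) hab h4
  rw [Equiv.swap_mul_self_mul] at heq
  have : (orbS σ).r x y := by rw [heq]; exact Or.inl hxy
  exact this

lemma cc_one : cc (1 : Equiv.Perm (Fin n)) = n := by
  have e : Quotient (orbS (1 : Equiv.Perm (Fin n))) ≃ Fin n := by
    refine ⟨Quotient.lift id (fun x y h => ?_), Quotient.mk _, ?_, ?_⟩
    · exact Equiv.Perm.sameCycle_one.mp h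
    · intro q; induction q using Quotient.ind with | _ x => rfl
    · intro x; rfl
  rw [cc, Nat.card_congr e, Nat.card_eq_fintype_card, Fintype.card_fin]

lemma cc_le (σ : Equiv.Perm (Fin n)) : cc σ ≤ n := by
  have hsurj : Function.Surjective (Quotient.mk (orbS σ)) := fun q => q.exists_rep
  have := Nat.card_le_card_of_surjective _ hsurj
  rwa [Nat.card_eq_fintype_card (α := Fin n), Fintype.card_fin] at this

lemma eq_one_of_cc (h : cc σ = n) : σ = 1 := by
  classical
  have hF : Fintype (Quotient (orbS σ)) := Fintype.ofFinite _
  have hsurj : Function.Surjective (Quotient.mk (orbS σ)) := fun q => q.exists_rep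
  have hcards : Fintype.card (Fin n) = Fintype.card (Quotient (orbS σ)) := by
    have := h
    rw [cc, Nat.card_eq_fintype_card] at this
    rw [Fintype.card_fin, this]
  have hbij : Function.Bijective (Quotient.mk (orbS σ)) :=
    (Fintype.bijective_iff_surjective_and_card _).mpr ⟨hsurj, hcards⟩
  have hinj : ∀ x y : Fin n, σ.SameCycle x y → x = y := by
    intro x y hxy
    exact hbij.1 (Quotient.sound hxy)
  ext x
  have := hinj x (σ x) (sameCycle_apply_right.mpr (SameCycle.refl σ x))
  simp [← this]

lemma exists_swap_list (σ : Equiv.Perm (Fin n)) : ∃ l : List (Equiv.Perm (Fin n)),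
    (∀ τ ∈ l, τ.IsSwap) ∧ l.prod = σ ∧ l.length + cc σ = n := by
  generalize hm : n - cc σ = m
  induction m generalizing σ with
  | zero =>
    have : cc σ = n := le_antisymm (cc_le σ) (by omega)
    have h1 : σ = 1 := eq_one_of_cc this
    exact ⟨[], by simp, by simp [h1], by simpa [this]⟩
  | succ k ih =>
    have hne : σ ≠ 1 := by
      intro h1
      rw [h1, cc_one] at hm
      omega
    have : ∃ a : Fin n, σ a ≠ a := by
      by_contra hc
      push_neg at hc
      exact hne (Equiv.ext fun x => (hc x).symm ▸ (hc x))
    obtain ⟨a, ha⟩ := this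
    have hsc : σ.SameCycle a (σ a) := sameCycle_apply_right.mpr (SameCycle.refl σ a)
    have hsplit := cc_swap_mul_split (Ne.symm ha) hsc
    obtain ⟨l', hl1, hl2, hl3⟩ := ih (Equiv.swap a (σ a) * σ) (by omega)
    refine ⟨Equiv.swap a (σ a) :: l', ?_, ?_, ?_⟩
    · intro t ht
      rcases List.mem_cons.mp ht with rfl | ht
      · exact ⟨a, σ a, Ne.symm ha, rfl⟩
      · exact hl1 t ht
    · rw [List.prod_cons, hl2, Equiv.swap_mul_self_mul]
    · simp only [List.length_cons]
      omega


lemma le_swap_list : ∀ l : List (Equiv.Perm (Fin n)), (∀ τ ∈ l, τ.IsSwap) →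
    n ≤ l.length + cc l.prod := by
  intro l
  induction l with
  | nil => intro _; simp [cc_one]
  | cons t l' ih =>
    intro hswaps
    obtain ⟨a, b, hab, rfl⟩ := hswaps t List.mem_cons_self
    have ih' := ih (fun τ hτ => hswaps τ (List.mem_cons_of_mem _ hτ))
    rw [List.prod_cons, List.length_cons]
    by_cases hsc : (l'.prod).SameCycle a b
    · have := cc_swap_mul_split hab hsc
      omega
    · have := cc_swap_mul_merge hab hsc
      omega

lemma lenEq (σ : Equiv.Perm (Fin n)) : reflectionLength σ + cc σ = n := by
  obtain ⟨l, hl1, hl2, hl3⟩ := exists_swap_list σ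
  have hmem : l.length ∈ {k | ∃ l : List (Equiv.Perm (Fin n)),
      (∀ τ ∈ l, τ.IsSwap) ∧ l.length = k ∧ l.prod = σ} := ⟨l, hl1, rfl, hl2⟩
  have hupper : reflectionLength σ ≤ l.length := Nat.sInf_le hmem
  have hinf := Nat.sInf_mem (⟨l.length, hmem⟩ : {k | ∃ l : List (Equiv.Perm (Fin n)),
      (∀ τ ∈ l, τ.IsSwap) ∧ l.length = k ∧ l.prod = σ}.Nonempty)
  obtain ⟨l0, h01, h02, h03⟩ := hinf
  have hlower := le_swap_list l0 h01
  rw [h03] at hlower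
  rw [reflectionLength] at *
  omega


lemma rl_le {l : List (Equiv.Perm (Fin n))} (hl : ∀ τ ∈ l, τ.IsSwap) :
    reflectionLength l.prod ≤ l.length := Nat.sInf_le ⟨l, hl, rfl, rfl⟩

lemma exists_minlist (σ : Equiv.Perm (Fin n)) : ∃ l : List (Equiv.Perm (Fin n)),
    (∀ τ ∈ l, τ.IsSwap) ∧ l.length = reflectionLength σ ∧ l.prod = σ := by
  obtain ⟨l, hl1, hl2, hl3⟩ := exists_swap_list σ
  exact Nat.sInf_mem (⟨l.length, l, hl1, rfl, hl2⟩ : {k | ∃ l : List (Equiv.Perm (Fin n)),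
      (∀ τ ∈ l, τ.IsSwap) ∧ l.length = k ∧ l.prod = σ}.Nonempty)

lemma rl_one : reflectionLength (1 : Equiv.Perm (Fin n)) = 0 := by
  have h := lenEq (1 : Equiv.Perm (Fin n))
  rw [cc_one] at h
  omega

lemma eq_one_of_rl (h : reflectionLength σ = 0) : σ = 1 := by
  apply eq_one_of_cc
  have := lenEq σ
  omega

lemma cc_inv (σ : Equiv.Perm (Fin n)) : cc σ⁻¹ = cc σ := by
  unfold cc
  congr 1
  apply congrArg
  exact Setoid.ext fun x y => Equiv.Perm.sameCycle_inv

lemma rl_inv (σ : Equiv.Perm (Fin n)) : reflectionLength σ⁻¹ = reflectionLength σ := by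
  have h1 := lenEq σ
  have h2 := lenEq σ⁻¹
  rw [cc_inv] at h2
  omega

lemma rl_swap (hab : a ≠ b) : reflectionLength (Equiv.swap a b) = 1 := by
  have h1 : ¬ (1 : Equiv.Perm (Fin n)).SameCycle a b := by
    rw [Equiv.Perm.sameCycle_one]; exact hab
  have := cc_swap_mul_merge hab h1
  rw [mul_one, cc_one] at this
  have h2 := lenEq (Equiv.swap a b)
  omega

lemma triangle (σ τ : Equiv.Perm (Fin n)) :
    reflectionLength (σ * τ) ≤ reflectionLength σ + reflectionLength τ := by
  obtain ⟨l1, h11, h12, h13⟩ := exists_minlist σ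
  obtain ⟨l2, h21, h22, h23⟩ := exists_minlist τ
  have : (l1 ++ l2).prod = σ * τ := by rw [List.prod_append, h13, h23]
  have hle := rl_le (l := l1 ++ l2) (by
    intro t ht
    rcases List.mem_append.mp ht with h | h
    exacts [h11 t h, h21 t h])
  rw [this, List.length_append, h12, h22] at hle
  exact hle

lemma absLe_refl (σ : Equiv.Perm (Fin n)) : absLe σ σ := by
  unfold absLe
  simp [rl_one]

lemma absLe_trans {ρ : Equiv.Perm (Fin n)} (h1 : absLe σ τ) (h2 : absLe τ ρ) : absLe σ ρ := by
  unfold absLe at *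
  have t1 : reflectionLength (σ⁻¹ * ρ) ≤ reflectionLength (σ⁻¹ * τ) + reflectionLength (τ⁻¹ * ρ) := by
    have := triangle (σ⁻¹ * τ) (τ⁻¹ * ρ)
    rwa [show σ⁻¹ * τ * (τ⁻¹ * ρ) = σ⁻¹ * ρ by group] at this
  have t2 : reflectionLength ρ ≤ reflectionLength σ + reflectionLength (σ⁻¹ * ρ) := by
    have := triangle σ (σ⁻¹ * ρ)
    rwa [show σ * (σ⁻¹ * ρ) = ρ by group] at this
  omega

lemma absLe_one (σ : Equiv.Perm (Fin n)) : absLe 1 σ := by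
  unfold absLe
  simp [rl_one]

lemma rl_mul_swap_merge (hab : a ≠ b) (h : ¬ σ.SameCycle a b) :
    reflectionLength (σ * Equiv.swap a b) = reflectionLength σ + 1 := by
  have hinv : ¬ σ⁻¹.SameCycle a b := fun hc => h (Equiv.Perm.sameCycle_inv.mp hc)
  have hcc := cc_swap_mul_merge hab hinv
  have h1 := lenEq σ
  have h2 := lenEq (σ * Equiv.swap a b)
  have h3 : cc (σ * Equiv.swap a b) = cc (Equiv.swap a b * σ⁻¹) := by
    rw [← cc_inv (σ * Equiv.swap a b), mul_inv_rev, Equiv.swap_inv]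
  have h4 := cc_inv σ
  omega

lemma sc_mul_swap_merge (hab : a ≠ b) (h : ¬ σ.SameCycle a b)
    (hxy : σ.SameCycle x y) : (σ * Equiv.swap a b).SameCycle x y := by
  have hinv : ¬ σ⁻¹.SameCycle a b := fun hc => h (Equiv.Perm.sameCycle_inv.mp hc)
  have := sameCycle_of_swap_mul_merge (σ := σ⁻¹) hab hinv (Equiv.Perm.sameCycle_inv.mpr hxy)
  rw [show Equiv.swap a b * σ⁻¹ = (σ * Equiv.swap a b)⁻¹ by simp [mul_inv_rev]] at this
  exact Equiv.Perm.sameCycle_inv.mp this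

lemma rl_mul_swap_split (hab : a ≠ b) (h : σ.SameCycle a b) :
    reflectionLength σ = reflectionLength (σ * Equiv.swap a b) + 1 := by
  have hinv : σ⁻¹.SameCycle a b := Equiv.Perm.sameCycle_inv.mpr h
  have hcc := cc_swap_mul_split hab hinv
  have h1 := lenEq σ
  have h2 := lenEq (σ * Equiv.swap a b)
  have h3 : cc (σ * Equiv.swap a b) = cc (Equiv.swap a b * σ⁻¹) := by
    rw [← cc_inv (σ * Equiv.swap a b), mul_inv_rev, Equiv.swap_inv]
  have h4 := cc_inv σ
  have h5 := cc_le (Equiv.swap a b * σ⁻¹)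
  omega

lemma sc_mul_swap_split (hab : a ≠ b) (h : σ.SameCycle a b)
    (hxy : (σ * Equiv.swap a b).SameCycle x y) : σ.SameCycle x y := by
  have hinv : σ⁻¹.SameCycle a b := Equiv.Perm.sameCycle_inv.mpr h
  have hxy' : (Equiv.swap a b * σ⁻¹).SameCycle x y := by
    rw [show Equiv.swap a b * σ⁻¹ = (σ * Equiv.swap a b)⁻¹ by simp [mul_inv_rev]]
    exact Equiv.Perm.sameCycle_inv.mpr hxy
  exact Equiv.Perm.sameCycle_inv.mp (sameCycle_of_swap_mul_split hab hinv hxy')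

lemma not_sc_of_rl_succ (hab : a ≠ b)
    (h : reflectionLength (σ * Equiv.swap a b) = reflectionLength σ + 1) :
    ¬ σ.SameCycle a b := by
  intro hc
  have := rl_mul_swap_split hab hc
  omega

lemma chainStep (h : absLe σ τ) (hne : σ ≠ τ) :
    ∃ a b : Fin n, a ≠ b ∧ ¬ σ.SameCycle a b ∧
      reflectionLength (σ * Equiv.swap a b) = reflectionLength σ + 1 ∧
      absLe σ (σ * Equiv.swap a b) ∧ absLe (σ * Equiv.swap a b) τ := by
  obtain ⟨l, hl1, hl2, hl3⟩ := exists_minlist (σ⁻¹ * τ)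
  cases l with
  | nil =>
    exact absurd (inv_mul_eq_one.mp (by rw [← hl3]; rfl)) hne
  | cons t l' =>
    obtain ⟨a, b, hab, rfl⟩ := hl1 t List.mem_cons_self
    set σ' := σ * Equiv.swap a b with hσ'
    have hinv : σ'⁻¹ * τ = l'.prod := by
      have hpr : σ⁻¹ * τ = Equiv.swap a b * l'.prod := by rw [← hl3, List.prod_cons]
      rw [hσ', mul_inv_rev, mul_assoc, hpr, Equiv.swap_inv, ← mul_assoc,
        Equiv.swap_mul_self, one_mul]
    have hk : reflectionLength (σ'⁻¹ * τ) ≤ l'.length := by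
      rw [hinv]
      exact rl_le (fun u hu => hl1 u (List.mem_cons_of_mem _ hu))
    have hσ'le : reflectionLength σ' ≤ reflectionLength σ + 1 := by
      have := triangle σ (Equiv.swap a b)
      rwa [rl_swap hab] at this
    have htri : reflectionLength τ ≤ reflectionLength σ' + reflectionLength (σ'⁻¹ * τ) := by
      have := triangle σ' (σ'⁻¹ * τ)
      rwa [show σ' * (σ'⁻¹ * τ) = τ by group] at this
    unfold absLe at h
    have hlen : (Equiv.swap a b :: l').length = reflectionLength (σ⁻¹ * τ) := hl2
    rw [List.length_cons] at hlen
    have heq1 : reflectionLength σ' = reflectionLength σ + 1 := by omega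
    have heq2 : reflectionLength (σ'⁻¹ * τ) = l'.length := by omega
    refine ⟨a, b, hab, not_sc_of_rl_succ hab heq1, heq1, ?_, ?_⟩
    · unfold absLe
      rw [show σ⁻¹ * (σ * Equiv.swap a b) = Equiv.swap a b by group, rl_swap hab, ← hσ', heq1]
    · unfold absLe
      rw [← hσ']
      omega

lemma refine_of_absLe (h : absLe σ τ) : ∀ x y, σ.SameCycle x y → τ.SameCycle x y := by
  generalize hk : reflectionLength (σ⁻¹ * τ) = k
  induction k generalizing σ with
  | zero =>
    have hστ : σ = τ := inv_mul_eq_one.mp (eq_one_of_rl hk)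
    exact hστ ▸ fun x y hxy => hxy
  | succ k ih =>
    have hne : σ ≠ τ := by
      intro hc
      rw [hc] at hk
      simp [rl_one] at hk
    obtain ⟨a, b, hab, hnsc, hrl, h1, h2⟩ := chainStep h hne
    intro x y hxy
    have hstep := sc_mul_swap_merge hab hnsc hxy
    apply ih h2 _ _ _ hstep
    unfold absLe at h h2
    omega


open scoped Classical in
noncomputable def orbF (σ : Equiv.Perm (Fin n)) (x : Fin n) : Finset (Fin n) :=
  Finset.univ.filter (fun y => σ.SameCycle x y)

lemma mem_orbF : y ∈ orbF σ x ↔ σ.SameCycle x y := by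
  simp [orbF]

lemma self_mem_orbF : x ∈ orbF σ x := mem_orbF.mpr (SameCycle.refl σ x)

lemma orbF_eq (h : σ.SameCycle x y) : orbF σ x = orbF σ y := by
  ext z
  rw [mem_orbF, mem_orbF]
  exact ⟨fun hz => h.symm.trans hz, fun hz => h.trans hz⟩

open scoped Classical in
noncomputable def nxt (S : Finset (Fin n)) (x : Fin n) : Fin n :=
  if h : (S.filter (fun z => x < z)).Nonempty then (S.filter (fun z => x < z)).min' h
  else if h2 : S.Nonempty then S.min' h2 else x

lemma nxt_eq_above {S : Finset (Fin n)} (hy : y ∈ S) (hxy : x < y)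
    (hmin : ∀ z ∈ S, x < z → y ≤ z) : nxt S x = y := by
  classical
  have hyf : y ∈ S.filter (fun z => x < z) := Finset.mem_filter.mpr ⟨hy, hxy⟩
  have hne : (S.filter (fun z => x < z)).Nonempty := ⟨y, hyf⟩
  rw [nxt, dif_pos hne]
  apply le_antisymm (Finset.min'_le _ y hyf)
  have hm := Finset.min'_mem _ hne
  rw [Finset.mem_filter] at hm
  exact hmin _ hm.1 hm.2

lemma nxt_eq_min {S : Finset (Fin n)} (hS : S.Nonempty) (habove : ∀ z ∈ S, ¬ x < z) :
    nxt S x = S.min' hS := by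
  classical
  have hemp : ¬ (S.filter (fun z => x < z)).Nonempty := by
    rintro ⟨z, hz⟩
    rw [Finset.mem_filter] at hz
    exact habove z hz.1 hz.2
  rw [nxt, dif_neg hemp, dif_pos hS]

lemma nxt_mem {S : Finset (Fin n)} (hx : x ∈ S) : nxt S x ∈ S := by
  classical
  rw [nxt]
  split_ifs with h1 h2
  · have := Finset.min'_mem _ h1
    rw [Finset.mem_filter] at this
    exact this.1
  · exact Finset.min'_mem _ h2
  · exact hx

/-- Alignment: each element maps to the cyclically-next element of its orbit. -/
def Aligned (σ : Equiv.Perm (Fin n)) : Prop := ∀ x, σ x = nxt (orbF σ x) x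

/-- Noncrossing condition on the orbit partition. -/
def NC (σ : Equiv.Perm (Fin n)) : Prop := ∀ p q r s : Fin n, p < q → q < r → r < s →
  σ.SameCycle p r → σ.SameCycle q s → σ.SameCycle p q

lemma aligned_apply_mem (hA : Aligned σ) (hz : z ∈ orbF σ x) :
    σ z = nxt (orbF σ x) z := by
  rw [hA z, orbF_eq (mem_orbF.mp hz)]

lemma aligned_unique (hA : Aligned σ) (hB : Aligned τ)
    (h : ∀ x y, σ.SameCycle x y ↔ τ.SameCycle x y) : σ = τ := by
  ext x
  have : orbF σ x = orbF τ x := by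
    ext z; rw [mem_orbF, mem_orbF]; exact h x z
  rw [show σ x = nxt (orbF σ x) x from hA x, show τ x = nxt (orbF τ x) x from hB x, this]

lemma succCycle {S : Finset (Fin n)} {τ : Equiv.Perm (Fin n)}
    (h : ∀ z ∈ S, τ z = nxt S z) (hx : x ∈ S) (hy : y ∈ S) : τ.SameCycle x y := by
  classical
  have hS : S.Nonempty := ⟨x, hx⟩
  suffices H : ∀ k : ℕ, ∀ y : Fin n, y ∈ S → (y : ℕ) = k → τ.SameCycle (S.min' hS) y by
    exact ((H _ x hx rfl).symm.trans (H _ y hy rfl))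
  intro k
  induction k using Nat.strong_induction_on with
  | _ k ih =>
    intro y hy hyk
    by_cases hmin : y = S.min' hS
    · rw [hmin]
    · have h1 : S.min' hS < y := lt_of_le_of_ne (Finset.min'_le S y hy) (Ne.symm hmin)
      have hTne : (S.filter (fun w => w < y)).Nonempty :=
        ⟨S.min' hS, Finset.mem_filter.mpr ⟨Finset.min'_mem S hS, h1⟩⟩
      obtain ⟨M, hMS, hMlt, hMbd⟩ : ∃ M, M ∈ S ∧ M < y ∧ ∀ z ∈ S, z < y → z ≤ M := by
        refine ⟨(S.filter (fun w => w < y)).max' hTne, ?_, ?_, ?_⟩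
        · exact (Finset.mem_filter.mp (Finset.max'_mem _ hTne)).1
        · exact (Finset.mem_filter.mp (Finset.max'_mem _ hTne)).2
        · intro z hz hzy
          have hzf : z ∈ S.filter (fun w => w < y) := Finset.mem_filter.mpr ⟨hz, hzy⟩
          exact Finset.le_max' (S.filter (fun w => w < y)) z hzf
      have hnxt : nxt S M = y := nxt_eq_above hy hMlt (fun z hz hz' => by
        by_contra hc
        push_neg at hc
        exact absurd hz' (not_lt.mpr (hMbd z hz hc)))
      have hstep : τ M = y := (h _ hMS).trans hnxt
      have hvy : (M : ℕ) < k := by rw [← hyk]; exact hMlt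
      exact (ih M.val hvy M hMS rfl).trans
        (by rw [← hstep]; exact sameCycle_apply_right.mpr (SameCycle.refl τ M))

lemma invarOrbit {S : Finset (Fin n)} {τ : Equiv.Perm (Fin n)}
    (hS : ∀ z ∈ S, τ z ∈ S) (hx : x ∈ S) (hxy : τ.SameCycle x y) : y ∈ S := by
  obtain ⟨i, hi⟩ := sc_iff_nat.mp hxy
  subst hi
  clear hxy
  induction i with
  | zero => exact hx
  | succ k ihk =>
    rw [pow_succ', Equiv.Perm.mul_apply]
    exact hS _ ihk

lemma sc_untouched (hab : σ.SameCycle a b) (hx : ¬ σ.SameCycle x a) :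
    ((σ * Equiv.swap a b).SameCycle x y ↔ σ.SameCycle x y) := by
  set τ := σ * Equiv.swap a b with hτ
  have hagree : ∀ z, σ.SameCycle x z → τ z = σ z := by
    intro z hz
    have hza : z ≠ a := fun hc => hx (hc ▸ hz)
    have hzb : z ≠ b := fun hc => hx (hz.trans (by rw [hc]; exact hab.symm))
    show σ (Equiv.swap a b z) = σ z
    rw [Equiv.swap_apply_of_ne_of_ne hza hzb]
  have key : ∀ i : ℕ, (τ ^ i) x = (σ ^ i) x := by
    intro i
    induction i with
    | zero => rfl
    | succ k ihk =>
      have e1 : (τ ^ (k+1)) x = τ ((τ ^ k) x) := by rw [pow_succ', Equiv.Perm.mul_apply]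
      have e2 : (σ ^ (k+1)) x = σ ((σ ^ k) x) := by rw [pow_succ', Equiv.Perm.mul_apply]
      rw [e1, e2, ihk, hagree _ (sc_pow k)]
  constructor
  · intro h
    obtain ⟨i, hi⟩ := sc_iff_nat.mp h
    exact sc_iff_nat.mpr ⟨i, by rw [← key i]; exact hi⟩
  · intro h
    obtain ⟨i, hi⟩ := sc_iff_nat.mp h
    exact sc_iff_nat.mpr ⟨i, by rw [key i]; exact hi⟩


lemma nxt_above_spec {S : Finset (Fin n)} (h : ∃ w ∈ S, x < w) :
    x < nxt S x ∧ nxt S x ∈ S ∧ ∀ z ∈ S, x < z → nxt S x ≤ z := by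
  classical
  obtain ⟨w, hw, hxw⟩ := h
  have hne : (S.filter (fun z => x < z)).Nonempty := ⟨w, Finset.mem_filter.mpr ⟨hw, hxw⟩⟩
  rw [nxt, dif_pos hne]
  have hm := Finset.min'_mem _ hne
  rw [Finset.mem_filter] at hm
  exact ⟨hm.2, hm.1, fun z hz hxz => Finset.min'_le _ z (Finset.mem_filter.mpr ⟨hz, hxz⟩)⟩

section Split

variable (σ) (a b)

open scoped Classical in
noncomputable def O1 : Finset (Fin n) := (orbF σ a).filter (fun z => a < z ∧ z ≤ b)
open scoped Classical in
noncomputable def O2 : Finset (Fin n) := (orbF σ a).filter (fun z => ¬(a < z ∧ z ≤ b))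

end Split

lemma mem_O1 {z : Fin n} : z ∈ O1 σ a b ↔ z ∈ orbF σ a ∧ (a < z ∧ z ≤ b) := by
  classical
  simp [O1]

lemma mem_O2 {z : Fin n} : z ∈ O2 σ a b ↔ z ∈ orbF σ a ∧ ¬(a < z ∧ z ≤ b) := by
  classical
  simp [O2]

lemma split_lemma (hA : Aligned σ) (hN : NC σ) (hab : a < b) (hsc : σ.SameCycle a b) :
    Aligned (σ * Equiv.swap a b) ∧ NC (σ * Equiv.swap a b) ∧
    (∀ x y, x ∈ O1 σ a b → y ∈ O1 σ a b → (σ * Equiv.swap a b).SameCycle x y) ∧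
    (∀ x y, x ∈ O2 σ a b → y ∈ O2 σ a b → (σ * Equiv.swap a b).SameCycle x y) := by
  classical
  have hab' : a ≠ b := ne_of_lt hab
  set σ' := σ * Equiv.swap a b with hσ'def
  set B := orbF σ a with hBdef
  have haB : a ∈ B := self_mem_orbF
  have hbB : b ∈ B := mem_orbF.mpr hsc
  have happly : ∀ z ∈ B, σ z = nxt B z := fun z hz => aligned_apply_mem hA hz
  have hσ'a : σ' a = σ b := by
    show σ (Equiv.swap a b a) = σ b
    rw [Equiv.swap_apply_left]
  have hσ'b : σ' b = σ a := by
    show σ (Equiv.swap a b b) = σ a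
    rw [Equiv.swap_apply_right]
  have hσ'z : ∀ z : Fin n, z ≠ a → z ≠ b → σ' z = σ z := by
    intro z h1 h2
    show σ (Equiv.swap a b z) = σ z
    rw [Equiv.swap_apply_of_ne_of_ne h1 h2]
  have hBmin : B.min' ⟨a, haB⟩ ≤ a := Finset.min'_le B a haB
  have haO2 : a ∈ O2 σ a b := mem_O2.mpr ⟨haB, fun hc => absurd hc.1 (lt_irrefl a)⟩
  have hbO1 : b ∈ O1 σ a b := mem_O1.mpr ⟨hbB, hab, le_refl b⟩
  have hminBO2 : B.min' ⟨a, haB⟩ = (O2 σ a b).min' ⟨a, haO2⟩ := by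
    have hmO2mem : B.min' ⟨a, haB⟩ ∈ O2 σ a b :=
      mem_O2.mpr ⟨Finset.min'_mem B ⟨a, haB⟩, fun hc => absurd hc.1 (not_lt.mpr hBmin)⟩
    apply le_antisymm
    · exact Finset.min'_le B _ ((mem_O2.mp (Finset.min'_mem _ ⟨a, haO2⟩)).1)
    · exact Finset.min'_le _ _ hmO2mem
  have hO2alt : ∀ u ∈ O2 σ a b, u ≤ a ∨ b < u := by
    intro u hu
    obtain ⟨huB, hupred⟩ := mem_O2.mp hu
    by_contra hc
    push_neg at hc
    exact hupred hc
  -- Claim 1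
  have claim1 : ∀ z ∈ O1 σ a b, σ' z = nxt (O1 σ a b) z := by
    intro z hz
    obtain ⟨hzB, hza, hzb⟩ := mem_O1.mp hz
    by_cases hzeqb : z = b
    · rw [hzeqb] at hz ⊢
      rw [hσ'b, happly a haB]
      obtain ⟨hw1, hw2, hw3⟩ := nxt_above_spec (S := B) (x := a) ⟨b, hbB, hab⟩
      have hwO1 : nxt B a ∈ O1 σ a b := mem_O1.mpr ⟨hw2, hw1, hw3 b hbB hab⟩
      have hnone : ∀ u ∈ O1 σ a b, ¬ b < u := fun u hu hc =>
        absurd (mem_O1.mp hu).2.2 (not_le.mpr hc)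
      rw [nxt_eq_min ⟨b, hbO1⟩ hnone]
      apply le_antisymm
      · have hmm := Finset.min'_mem (O1 σ a b) ⟨b, hbO1⟩
        exact hw3 _ (mem_O1.mp hmm).1 (mem_O1.mp hmm).2.1
      · exact Finset.min'_le _ _ hwO1
    · have hzb' : z < b := lt_of_le_of_ne hzb hzeqb
      rw [hσ'z z (ne_of_gt hza) hzeqb, happly z hzB]
      obtain ⟨hw1, hw2, hw3⟩ := nxt_above_spec (S := B) (x := z) ⟨b, hbB, hzb'⟩
      have hwb : nxt B z ≤ b := hw3 b hbB hzb'
      have hwO1 : nxt B z ∈ O1 σ a b := mem_O1.mpr ⟨hw2, lt_trans hza hw1, hwb⟩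
      exact (nxt_eq_above hwO1 hw1 (fun u hu huz => hw3 u (mem_O1.mp hu).1 huz)).symm
  -- Claim 2
  have claim2 : ∀ z ∈ O2 σ a b, σ' z = nxt (O2 σ a b) z := by
    intro z hz
    obtain ⟨hzB, hzpred⟩ := mem_O2.mp hz
    rcases hO2alt z hz with hza | hzb
    · rcases eq_or_lt_of_le hza with hzeq | hzlt
      · -- z = a
        rw [hzeq] at hz ⊢
        rw [hσ'a, happly b hbB]
        by_cases hup : ∃ w ∈ B, b < w
        · obtain ⟨hw1, hw2, hw3⟩ := nxt_above_spec (S := B) (x := b) hup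
          have hwO2 : nxt B b ∈ O2 σ a b :=
            mem_O2.mpr ⟨hw2, fun hc => absurd hc.2 (not_le.mpr hw1)⟩
          refine (nxt_eq_above hwO2 (lt_trans hab hw1) ?_).symm
          intro u hu hau
          rcases hO2alt u hu with h' | h'
          · exact absurd hau (not_lt.mpr h')
          · exact hw3 u (mem_O2.mp hu).1 h'
        · push_neg at hup
          rw [nxt_eq_min ⟨a, haB⟩ (fun u hu hc => absurd hc (not_lt.mpr (hup u hu)))]
          have hnoneO2 : ∀ u ∈ O2 σ a b, ¬ a < u := by
            intro u hu hc
            rcases hO2alt u hu with h' | h'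
            · exact absurd hc (not_lt.mpr h')
            · exact absurd h' (not_lt.mpr (hup u (mem_O2.mp hu).1))
          rw [nxt_eq_min ⟨a, haO2⟩ hnoneO2]
          exact hminBO2
      · -- z < a
        rw [hσ'z z (ne_of_lt hzlt) (ne_of_lt (lt_trans hzlt hab)), happly z hzB]
        obtain ⟨hw1, hw2, hw3⟩ := nxt_above_spec (S := B) (x := z) ⟨a, haB, hzlt⟩
        have hwa : nxt B z ≤ a := hw3 a haB hzlt
        have hwO2 : nxt B z ∈ O2 σ a b :=
          mem_O2.mpr ⟨hw2, fun hc => absurd hc.1 (not_lt.mpr hwa)⟩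
        exact (nxt_eq_above hwO2 hw1 (fun u hu huz => hw3 u (mem_O2.mp hu).1 huz)).symm
    · -- b < z
      rw [hσ'z z (ne_of_gt (lt_trans hab hzb)) (ne_of_gt hzb), happly z hzB]
      by_cases hup : ∃ w ∈ B, z < w
      · obtain ⟨hw1, hw2, hw3⟩ := nxt_above_spec (S := B) (x := z) hup
        have hwO2 : nxt B z ∈ O2 σ a b :=
          mem_O2.mpr ⟨hw2, fun hc => absurd hc.2 (not_le.mpr (lt_trans hzb hw1))⟩
        exact (nxt_eq_above hwO2 hw1 (fun u hu huz => hw3 u (mem_O2.mp hu).1 huz)).symm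
      · push_neg at hup
        rw [nxt_eq_min ⟨a, haB⟩ (fun u hu hc => absurd hc (not_lt.mpr (hup u hu)))]
        have hnoneO2 : ∀ u ∈ O2 σ a b, ¬ z < u := fun u hu hc =>
          absurd hc (not_lt.mpr (hup u (mem_O2.mp hu).1))
        rw [nxt_eq_min ⟨z, hz⟩ hnoneO2]
        exact hminBO2
  -- closure & orbits
  have hO1closed : ∀ z ∈ O1 σ a b, σ' z ∈ O1 σ a b := by
    intro z hz; rw [claim1 z hz]; exact nxt_mem hz
  have hO2closed : ∀ z ∈ O2 σ a b, σ' z ∈ O2 σ a b := by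
    intro z hz; rw [claim2 z hz]; exact nxt_mem hz
  have hsc1 : ∀ x y, x ∈ O1 σ a b → y ∈ O1 σ a b → σ'.SameCycle x y :=
    fun x y hx hy => succCycle claim1 hx hy
  have hsc2 : ∀ x y, x ∈ O2 σ a b → y ∈ O2 σ a b → σ'.SameCycle x y :=
    fun x y hx hy => succCycle claim2 hx hy
  have hout : ∀ x, x ∉ B → (∀ y, (σ'.SameCycle x y ↔ σ.SameCycle x y)) := by
    intro x hx y
    have hxa : ¬ σ.SameCycle x a := fun hc => hx (mem_orbF.mpr hc.symm)
    exact sc_untouched hsc hxa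
  have halign : Aligned σ' := by
    intro x
    by_cases hxB : x ∈ B
    · by_cases hpred : a < x ∧ x ≤ b
      · have hx1 : x ∈ O1 σ a b := mem_O1.mpr ⟨hxB, hpred⟩
        have horb : orbF σ' x = O1 σ a b := by
          ext u
          rw [mem_orbF]
          exact ⟨fun h => invarOrbit hO1closed hx1 h, fun h => hsc1 x u hx1 h⟩
        rw [horb]
        exact claim1 x hx1
      · have hx2 : x ∈ O2 σ a b := mem_O2.mpr ⟨hxB, hpred⟩
        have horb : orbF σ' x = O2 σ a b := by
          ext u
          rw [mem_orbF]
          exact ⟨fun h => invarOrbit hO2closed hx2 h, fun h => hsc2 x u hx2 h⟩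
        rw [horb]
        exact claim2 x hx2
    · have horbx : orbF σ' x = orbF σ x := by
        ext u
        rw [mem_orbF, mem_orbF]
        exact hout x hxB u
      rw [horbx, hσ'z x (fun hc => hxB (hc ▸ haB)) (fun hc => hxB (hc ▸ hbB))]
      exact hA x
  have hnc : NC σ' := by
    intro p q r s hpq hqr hrs h1 h2
    have hσ1 : σ.SameCycle p r := sc_mul_swap_split hab' hsc h1
    have hσ2 : σ.SameCycle q s := sc_mul_swap_split hab' hsc h2
    have hNCpq : σ.SameCycle p q := hN p q r s hpq hqr hrs hσ1 hσ2
    by_cases hpB : p ∈ B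
    · have hqB : q ∈ B := mem_orbF.mpr ((mem_orbF.mp hpB).trans hNCpq)
      by_cases hp1 : a < p ∧ p ≤ b
      · have hpO1 : p ∈ O1 σ a b := mem_O1.mpr ⟨hpB, hp1⟩
        by_cases hq1 : a < q ∧ q ≤ b
        · exact hsc1 p q hpO1 (mem_O1.mpr ⟨hqB, hq1⟩)
        · exfalso
          have hrO1 : r ∈ O1 σ a b := invarOrbit hO1closed hpO1 h1
          have hr1 := (mem_O1.mp hrO1).2
          exact hq1 ⟨lt_trans hp1.1 hpq, le_trans (le_of_lt hqr) hr1.2⟩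
      · have hpO2 : p ∈ O2 σ a b := mem_O2.mpr ⟨hpB, hp1⟩
        by_cases hq1 : a < q ∧ q ≤ b
        · exfalso
          have hqO1 : q ∈ O1 σ a b := mem_O1.mpr ⟨hqB, hq1⟩
          have hsO1 : s ∈ O1 σ a b := invarOrbit hO1closed hqO1 h2
          have hrO2 : r ∈ O2 σ a b := invarOrbit hO2closed hpO2 h1
          have hs1 := (mem_O1.mp hsO1).2
          have hr2 := (mem_O2.mp hrO2).2
          exact hr2 ⟨lt_trans hq1.1 hqr, le_trans (le_of_lt hrs) hs1.2⟩
        · exact hsc2 p q hpO2 (mem_O2.mpr ⟨hqB, hq1⟩)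
    · exact (hout p hpB q).mpr hNCpq
  exact ⟨halign, hnc, hsc1, hsc2⟩

open Fin.NatCast Fin.CommRing in
lemma finRotate_pow {m : ℕ} (x : Fin (m+1)) (k : ℕ) :
    ((finRotate (m+1)) ^ k) x = x + (k : Fin (m+1)) := by
  induction k with
  | zero => simp
  | succ j ih =>
    rw [pow_succ', Equiv.Perm.mul_apply, ih, finRotate_succ_apply]
    push_cast
    ring

open Fin.CommRing in
lemma sc_finRotate {m : ℕ} (x y : Fin (m+1)) : (finRotate (m+1)).SameCycle x y := by
  apply sc_iff_nat.mpr
  refine ⟨(y - x).val, ?_⟩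
  rw [finRotate_pow, Fin.cast_val_eq_self]
  ring

lemma aligned_finRotate {m : ℕ} : Aligned (finRotate (m+1)) := by
  intro x
  have horb : orbF (finRotate (m+1)) x = Finset.univ := by
    ext u
    simp [mem_orbF, sc_finRotate]
  rw [horb, finRotate_succ_apply]
  by_cases hx : x = Fin.last m
  · have hnone : ∀ z ∈ (Finset.univ : Finset (Fin (m+1))), ¬ x < z := by
      intro z _ hc
      rw [hx] at hc
      exact absurd (Fin.le_last z) (not_le.mpr hc)
    rw [nxt_eq_min Finset.univ_nonempty hnone]
    have h1 : x + 1 = 0 := by rw [hx]; exact Fin.last_add_one m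
    rw [h1]
    apply le_antisymm
    · exact Fin.zero_le _
    · exact Finset.min'_le _ (0 : Fin (m+1)) (Finset.mem_univ _)
  · have hlt : (x : ℕ) < m := by
      have := x.isLt
      rcases Nat.lt_or_ge (x : ℕ) m with h | h
      · exact h
      · exact absurd (Fin.ext (by omega : (x : ℕ) = m)) hx
    have hval : ((x + 1 : Fin (m+1)) : ℕ) = (x : ℕ) + 1 := by
      rw [Fin.val_add_one]
      rw [if_neg hx]
    symm
    apply nxt_eq_above (Finset.mem_univ (x+1))
    · rw [Fin.lt_def, hval]; omega
    · intro z _ hz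
      rw [Fin.le_def, hval]
      rw [Fin.lt_def] at hz
      omega

lemma nc_finRotate {m : ℕ} : NC (finRotate (m+1)) :=
  fun p q _ _ _ _ _ _ _ => sc_finRotate p q

lemma aligned_nc_c : Aligned (finRotate n) ∧ NC (finRotate n) := by
  cases n with
  | zero => exact ⟨fun x => x.elim0, fun p _ _ _ _ _ _ _ _ => p.elim0⟩
  | succ m => exact ⟨aligned_finRotate, nc_finRotate⟩

lemma D_nice (h : absLe σ (finRotate n)) : Aligned σ ∧ NC σ := by
  generalize hk : reflectionLength (σ⁻¹ * finRotate n) = k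
  induction k generalizing σ with
  | zero =>
    have hc : σ = finRotate n := inv_mul_eq_one.mp (eq_one_of_rl hk)
    rw [hc]
    exact aligned_nc_c
  | succ k ih =>
    have hne : σ ≠ finRotate n := by
      intro hc
      rw [hc] at hk
      simp [rl_one] at hk
    obtain ⟨a, b, hab, hnsc, hrl, h1, h2⟩ := chainStep h hne
    have hk' : reflectionLength ((σ * Equiv.swap a b)⁻¹ * finRotate n) = k := by
      unfold absLe at h h2
      omega
    obtain ⟨hA', hN'⟩ := ih h2 hk'
    have hback : (σ * Equiv.swap a b) * Equiv.swap a b = σ := by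
      rw [mul_assoc, Equiv.swap_mul_self, mul_one]
    have hsc' : (σ * Equiv.swap a b).SameCycle a b := by
      by_contra hc
      have := rl_mul_swap_merge hab hc
      rw [hback] at this
      omega
    rcases lt_or_gt_of_ne hab with hlt | hgt
    · obtain ⟨hA, hN, -, -⟩ := split_lemma hA' hN' hlt hsc'
      rw [hback] at hA hN
      exact ⟨hA, hN⟩
    · have hswapc : Equiv.swap a b = Equiv.swap b a := Equiv.swap_comm a b
      obtain ⟨hA, hN, -, -⟩ := split_lemma hA' hN' hgt hsc'.symm
      rw [← hswapc, hback] at hA hN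
      exact ⟨hA, hN⟩

lemma gap_lemma {m : ℕ} {τ : Equiv.Perm (Fin (m+1))} (hN : NC τ) {a b' x y : Fin (m+1)}
    (hab' : τ.SameCycle a b')
    (hgap : ∀ w, τ.SameCycle a w → ¬ (a < w ∧ w < b'))
    (hx : a < x) (hxb : x < b') (hxy : τ.SameCycle x y) : a < y ∧ y < b' := by
  rcases lt_trichotomy y a with hya | hya | hya
  · exfalso
    have h1 : τ.SameCycle y a := hN y a x b' hya hx hxb hxy.symm hab'
    exact hgap x (h1.symm.trans hxy.symm) ⟨hx, hxb⟩
  · exfalso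
    exact hgap x ((hya ▸ hxy.symm : τ.SameCycle a x)) ⟨hx, hxb⟩
  · rcases lt_trichotomy y b' with hyb | hyb | hyb
    · exact ⟨hya, hyb⟩
    · exfalso
      exact hgap x (hab'.trans (hyb ▸ hxy.symm : τ.SameCycle b' x)) ⟨hx, hxb⟩
    · exfalso
      have h1 : τ.SameCycle a x := hN a x b' y hx hxb hyb hab' hxy
      exact hgap x h1 ⟨hx, hxb⟩

lemma exists_merge {m : ℕ} {σ τ : Equiv.Perm (Fin (m+1))}
    (hσD : absLe σ (finRotate (m+1))) (hNτ : NC τ)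
    (href : ∀ x y, σ.SameCycle x y → τ.SameCycle x y)
    (hneq : ∃ x y, τ.SameCycle x y ∧ ¬ σ.SameCycle x y) :
    ∃ a b : Fin (m+1), a ≠ b ∧ τ.SameCycle a b ∧ ¬ σ.SameCycle a b ∧
      (σ⁻¹ * finRotate (m+1)).SameCycle a b := by
  classical
  obtain ⟨x0, y0, hxy0, hnxy0⟩ := hneq
  set B := orbF τ x0 with hBdef
  have hx0B : x0 ∈ B := self_mem_orbF
  have hy0B : y0 ∈ B := mem_orbF.mpr hxy0
  have hBne : B.Nonempty := ⟨x0, hx0B⟩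
  set MB := B.max' hBne with hMBdef
  have hMBB : MB ∈ B := Finset.max'_mem _ _
  obtain ⟨w, hwB, hwMB⟩ : ∃ w, w ∈ B ∧ ¬ σ.SameCycle w MB := by
    by_cases h1 : σ.SameCycle x0 MB
    · refine ⟨y0, hy0B, fun h2 => hnxy0 (h1.trans h2.symm)⟩
    · exact ⟨x0, hx0B, h1⟩
  set a := (orbF σ w).max' ⟨w, self_mem_orbF⟩ with hadef
  have haw : σ.SameCycle w a := mem_orbF.mp (Finset.max'_mem _ _)
  have haB : a ∈ B := mem_orbF.mpr ((mem_orbF.mp hwB).trans (href w a haw))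
  have hσmax : ∀ u, σ.SameCycle a u → u ≤ a := by
    intro u hu
    have : u ∈ orbF σ w := mem_orbF.mpr (haw.trans hu)
    exact Finset.le_max' _ u this
  have hanMB : ¬ σ.SameCycle a MB := fun hc => hwMB (haw.trans hc)
  have haMB : a < MB :=
    lt_of_le_of_ne (Finset.le_max' _ a haB) (fun hc => hanMB (hc ▸ SameCycle.refl σ a))
  have hfne : (B.filter (fun u => a < u)).Nonempty := ⟨MB, Finset.mem_filter.mpr ⟨hMBB, haMB⟩⟩
  set b' := (B.filter (fun u => a < u)).min' hfne with hb'def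
  have hb'f := Finset.mem_filter.mp (Finset.min'_mem _ hfne)
  obtain ⟨hb'B, hab'lt⟩ := hb'f
  have hb'min : ∀ u ∈ B, a < u → b' ≤ u := fun u hu hau =>
    Finset.min'_le _ u (Finset.mem_filter.mpr ⟨hu, hau⟩)
  have hτab' : τ.SameCycle a b' := (mem_orbF.mp haB).symm.trans (mem_orbF.mp hb'B)
  have hgap : ∀ u, τ.SameCycle a u → ¬ (a < u ∧ u < b') := by
    intro u hu ⟨h1, h2⟩
    have huB : u ∈ B := mem_orbF.mpr ((mem_orbF.mp haB).trans hu)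
    exact absurd h2 (not_lt.mpr (hb'min u huB h1))
  set K := σ⁻¹ * finRotate (m+1) with hKdef
  have hKapply : ∀ z : Fin (m+1), K z = σ⁻¹ (z + 1) := by
    intro z
    show σ⁻¹ (finRotate (m+1) z) = σ⁻¹ (z + 1)
    rw [finRotate_succ_apply]
  have hb'bd : (b' : ℕ) ≤ m := by have := b'.isLt; omega
  by_contra hno
  push_neg at hno
  -- exit: if z+1 = b' along the K-orbit of a we find the desired pair
  have hexit : ∀ z : Fin (m+1), K.SameCycle a z → z + 1 = b' → False := by
    intro z hKz hz1
    have hKzb : K z = σ⁻¹ b' := by rw [hKapply, hz1]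
    have hσKz : σ.SameCycle (K z) b' := by
      rw [hKzb]
      exact sameCycle_symm_apply_left.mpr (SameCycle.refl σ b')
    have hτaK : τ.SameCycle a (K z) := hτab'.trans (href _ _ hσKz).symm
    have hnσaK : ¬ σ.SameCycle a (K z) := by
      intro hc
      have h1 : σ.SameCycle a b' := hc.trans hσKz
      exact absurd (hσmax b' h1) (not_le.mpr hab'lt)
    have hKaK : K.SameCycle a (K z) := hKz.trans (sameCycle_apply_right.mpr (SameCycle.refl K z))
    have hane : a ≠ K z := fun hc => hnσaK (hc ▸ SameCycle.refl σ a)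
    exact hno a (K z) hane hτaK hnσaK hKaK
  have hstep : ∀ z : Fin (m+1), K.SameCycle a z → a ≤ z → z < b' →
      (K.SameCycle a (K z) ∧ a < K z ∧ K z < b') := by
    intro z hKz haz hzb
    have hzlast : (z : ℕ) < m := by
      have h1 : (z : ℕ) < (b' : ℕ) := hzb
      omega
    have hz1val : ((z + 1 : Fin (m+1)) : ℕ) = (z : ℕ) + 1 := by
      rw [Fin.val_add_one, if_neg]
      intro hc
      rw [hc] at hzlast
      simp [Fin.last] at hzlast
    by_cases hz1 : z + 1 = b'
    · exact absurd hz1 (fun h => (hexit z hKz h).elim)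
    · have hz1b : z + 1 < b' := by
        rw [Fin.lt_def, hz1val]
        have h1 : (z : ℕ) < (b' : ℕ) := hzb
        rcases Nat.lt_or_ge ((z:ℕ)+1) (b':ℕ) with h | h
        · exact h
        · exact absurd (Fin.ext (by rw [hz1val]; omega) : z + 1 = b') hz1
      have haz1 : a < z + 1 := by
        rw [Fin.lt_def, hz1val]
        have : (a : ℕ) ≤ (z : ℕ) := haz
        omega
      have hσKz : σ.SameCycle (z+1) (K z) := by
        rw [hKapply]
        exact sameCycle_symm_apply_right.mpr (SameCycle.refl σ (z+1))
      have hbd := gap_lemma hNτ hτab' hgap haz1 hz1b (href _ _ hσKz)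
      exact ⟨hKz.trans (sameCycle_apply_right.mpr (SameCycle.refl K z)), hbd⟩
  have hGood : ∀ i : ℕ, K.SameCycle a ((K ^ (i+1)) a) ∧ a < (K ^ (i+1)) a ∧ (K ^ (i+1)) a < b' := by
    intro i
    induction i with
    | zero =>
      have h1 : (K ^ 1) a = K a := by rw [pow_one]
      rw [h1]
      exact hstep a (SameCycle.refl K a) (le_refl a) hab'lt
    | succ j ihj =>
      obtain ⟨ih1, ih2, ih3⟩ := ihj
      have h1 : (K ^ (j+2)) a = K ((K ^ (j+1)) a) := by rw [pow_succ', Equiv.Perm.mul_apply]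
      rw [h1]
      exact hstep _ ih1 (le_of_lt ih2) ih3
  have hp : (K ^ (orderOf K)) a = a := by rw [pow_orderOf_eq_one]; rfl
  have hppos : 0 < orderOf K := orderOf_pos K
  have := (hGood (orderOf K - 1)).2.1
  rw [show orderOf K - 1 + 1 = orderOf K by omega, hp] at this
  exact absurd this (lt_irrefl a)

lemma absLe_of_refines {m : ℕ} {σ τ : Equiv.Perm (Fin (m+1))}
    (hσ : absLe σ (finRotate (m+1))) (hτ : absLe τ (finRotate (m+1)))
    (href : ∀ x y, σ.SameCycle x y → τ.SameCycle x y) : absLe σ τ := by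
  suffices H : ∀ N : ℕ, ∀ σ : Equiv.Perm (Fin (m+1)), absLe σ (finRotate (m+1)) →
      (∀ x y, σ.SameCycle x y → τ.SameCycle x y) → cc σ = N → absLe σ τ by
    exact H (cc σ) σ hσ href rfl
  intro N
  induction N using Nat.strong_induction_on with
  | _ N ih =>
  intro σ hσ href hN
  by_cases hpart : ∀ x y, τ.SameCycle x y → σ.SameCycle x y
  · have heq : σ = τ := aligned_unique (D_nice hσ).1 (D_nice hτ).1
      (fun x y => ⟨href x y, hpart x y⟩)
    rw [heq]
    exact absLe_refl τ
  · push_neg at hpart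
    obtain ⟨x0, y0, hx0, hy0⟩ := hpart
    obtain ⟨a, b, hab, hτab, hnσab, hKab⟩ :=
      exists_merge hσ (D_nice hτ).2 href ⟨x0, y0, hx0, hy0⟩
    set σ' := σ * Equiv.swap a b with hσ'def
    have hrl' : reflectionLength σ' = reflectionLength σ + 1 := rl_mul_swap_merge hab hnσab
    have hle1 : absLe σ σ' := by
      unfold absLe
      rw [show σ⁻¹ * σ' = Equiv.swap a b by rw [hσ'def]; group, rl_swap hab, hrl']
    have hKsplit := cc_swap_mul_split hab hKab
    have hKeq : reflectionLength (Equiv.swap a b * (σ⁻¹ * finRotate (m+1))) + 1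
        = reflectionLength (σ⁻¹ * finRotate (m+1)) := by
      have e1 := lenEq (Equiv.swap a b * (σ⁻¹ * finRotate (m+1)))
      have e2 := lenEq (σ⁻¹ * finRotate (m+1))
      have e3 := cc_le (Equiv.swap a b * (σ⁻¹ * finRotate (m+1)))
      omega
    have hσ'inv : σ'⁻¹ * finRotate (m+1) = Equiv.swap a b * (σ⁻¹ * finRotate (m+1)) := by
      rw [hσ'def, mul_inv_rev, Equiv.swap_inv, mul_assoc]
    have hσ'D : absLe σ' (finRotate (m+1)) := by
      unfold absLe at hσ ⊢
      rw [hσ'inv, hrl']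
      omega
    have hinvmerge : ¬ σ⁻¹.SameCycle a b := fun hc => hnσab (Equiv.Perm.sameCycle_inv.mp hc)
    have href' : ∀ x y, σ'.SameCycle x y → τ.SameCycle x y := by
      intro x y hxy
      have hxy' : (Equiv.swap a b * σ⁻¹).SameCycle x y := by
        rw [show Equiv.swap a b * σ⁻¹ = σ'⁻¹ by rw [hσ'def, mul_inv_rev, Equiv.swap_inv]]
        exact Equiv.Perm.sameCycle_inv.mpr hxy
      have hmg : (mg (orbS σ⁻¹) a b).r x y := by
        rw [← orbS_swap_mul_merge hab hinvmerge]
        exact hxy'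
      rcases hmg with h | ⟨h1, h2⟩ | ⟨h1, h2⟩
      · exact href x y (Equiv.Perm.sameCycle_inv.mp h)
      · exact ((href _ _ (Equiv.Perm.sameCycle_inv.mp h1)).trans hτab).trans
          (href _ _ (Equiv.Perm.sameCycle_inv.mp h2))
      · exact ((href _ _ (Equiv.Perm.sameCycle_inv.mp h1)).trans hτab.symm).trans
          (href _ _ (Equiv.Perm.sameCycle_inv.mp h2))
    have hccstep : cc σ' + 1 = cc σ := by
      have h1 := cc_swap_mul_merge hab hinvmerge
      have h2 : cc σ' = cc (Equiv.swap a b * σ⁻¹) := by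
        rw [← cc_inv σ', hσ'def, mul_inv_rev, Equiv.swap_inv]
      have h3 := cc_inv σ
      omega
    have hrec : absLe σ' τ := ih (cc σ') (by omega) σ' hσ'D href' rfl
    exact absLe_trans hle1 hrec

lemma reach {m : ℕ} (R : Fin (m+1) → Fin (m+1) → Prop)
    (hrefl : ∀ x, R x x) (hsymm : ∀ {x y}, R x y → R y x)
    (htrans : ∀ {x y z}, R x y → R y z → R x z)
    (hRNC : ∀ p q r s, p < q → q < r → r < s → R p r → R q s → R p q) :
    ∀ L : ℕ, ∀ σ : Equiv.Perm (Fin (m+1)), reflectionLength σ = L →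
      absLe σ (finRotate (m+1)) → (∀ x y, R x y → σ.SameCycle x y) →
      ∃ μ, absLe μ (finRotate (m+1)) ∧ absLe μ σ ∧ (∀ x y, μ.SameCycle x y ↔ R x y) := by
  intro L
  induction L using Nat.strong_induction_on with
  | _ L ih =>
  intro σ hL hσD href
  by_cases hall : ∀ x y, σ.SameCycle x y → R x y
  · exact ⟨σ, hσD, absLe_refl σ, fun x y => ⟨hall x y, href x y⟩⟩
  push_neg at hall
  obtain ⟨x0, y0, hx0sc, hx0R⟩ := hall
  classical
  set B := orbF σ x0 with hB
  set clF : Fin (m+1) → Finset (Fin (m+1)) := fun w => Finset.univ.filter (fun u => R w u)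
    with hclF
  have hclmem : ∀ w u : Fin (m+1), u ∈ clF w ↔ R w u := by intro w u; simp [hclF]
  have hclne : ∀ w : Fin (m+1), w ∈ clF w := fun w => (hclmem w w).mpr (hrefl w)
  set W := B.filter (fun w => ∃ u ∈ B, ¬ R w u) with hW
  have hx0W : x0 ∈ W :=
    Finset.mem_filter.mpr ⟨self_mem_orbF, y0, mem_orbF.mpr hx0sc, hx0R⟩
  obtain ⟨w, hwW, hwmin⟩ := Finset.exists_min_image W
    (fun w => ((clF w).max' ⟨w, hclne w⟩ : ℕ) - ((clF w).min' ⟨w, hclne w⟩ : ℕ)) ⟨x0, hx0W⟩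
  obtain ⟨hwB, hwprop⟩ := Finset.mem_filter.mp hwW
  have hclsubB : ∀ u, R w u → u ∈ B := fun u hu =>
    mem_orbF.mpr ((mem_orbF.mp hwB).trans (href w u hu))
  set mn := (clF w).min' ⟨w, hclne w⟩ with hmn
  set mx := (clF w).max' ⟨w, hclne w⟩ with hmx
  have hmnq : R w mn := (hclmem w mn).mp (Finset.min'_mem _ _)
  have hmxq : R w mx := (hclmem w mx).mp (Finset.max'_mem _ _)
  have hmnB : mn ∈ B := hclsubB mn hmnq
  have hmxB : mx ∈ B := hclsubB mx hmxq
  have hmnle : ∀ u, R w u → mn ≤ u := fun u hu => Finset.min'_le _ u ((hclmem w u).mpr hu)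
  have hmxle : ∀ u, R w u → u ≤ mx := fun u hu => Finset.le_max' _ u ((hclmem w u).mpr hu)
  have hmnmx : mn ≤ mx := hmxle mn hmnq
  -- contiguity of the minimal class
  have hcontig : ∀ z ∈ B, mn ≤ z → z ≤ mx → R w z := by
    intro z hzB h1 h2
    by_contra hnz
    have hzW : z ∈ W := Finset.mem_filter.mpr ⟨hzB, w, hwB, fun h => hnz (hsymm h)⟩
    have hzmn : mn < z := lt_of_le_of_ne h1 (fun hc => hnz (hc ▸ hmnq))
    have hzmx : z < mx := lt_of_le_of_ne h2 (fun hc => hnz (hc ▸ hmxq))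
    have hmnmx' : R mn mx := htrans (hsymm hmnq) hmxq
    have hsub : ∀ u, R z u → mn ≤ u ∧ u ≤ mx := by
      intro u hu
      constructor
      · by_contra hc
        push_neg at hc
        have h3 : R u mn := hRNC u mn z mx hc hzmn hzmx (hsymm hu) hmnmx'
        exact hnz (htrans hmnq (hsymm (htrans hu h3)))
      · by_contra hc
        push_neg at hc
        have h3 : R mn z := hRNC mn z mx u hzmn hzmx hc hmnmx' hu
        exact hnz (htrans hmnq h3)
    have hminz : (mn : ℕ) < ((clF z).min' ⟨z, hclne z⟩ : ℕ) := by
      have h3 : mn ≤ (clF z).min' ⟨z, hclne z⟩ :=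
        (hsub _ ((hclmem _ _).mp (Finset.min'_mem _ _))).1
      rcases lt_or_eq_of_le h3 with h4 | h4
      · exact h4
      · exfalso
        have h5 : R z mn := by
          have := Finset.min'_mem (clF z) ⟨z, hclne z⟩
          rw [← h4] at this
          exact (hclmem z mn).mp this
        exact hnz (htrans hmnq (hsymm h5))
    have hmaxz : ((clF z).max' ⟨z, hclne z⟩ : ℕ) ≤ (mx : ℕ) :=
      (hsub _ ((hclmem _ _).mp (Finset.max'_mem _ _))).2
    have hminmaxz' : (clF z).min' ⟨z, hclne z⟩ ≤ (clF z).max' ⟨z, hclne z⟩ :=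
      Finset.min'_le _ _ (Finset.max'_mem _ _)
    have hminmaxz : ((clF z).min' ⟨z, hclne z⟩ : ℕ) ≤ ((clF z).max' ⟨z, hclne z⟩ : ℕ) :=
      hminmaxz'
    have hmono := hwmin z hzW
    have hv1 : (mn : ℕ) < (mx : ℕ) := lt_trans hzmn hzmx
    omega
  -- choose the splitting pair
  obtain ⟨aa, bb, haaB, hbbB, haabb, hcase⟩ :
      ∃ aa bb, aa ∈ B ∧ bb ∈ B ∧ aa < bb ∧
        ((∀ z, z ∈ B → ((aa < z ∧ z ≤ bb) ↔ R w z)) ∨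
         (∀ z, z ∈ B → ((aa < z ∧ z ≤ bb) ↔ ¬ R w z))) := by
    by_cases hlow : ∃ v ∈ B, v < mn
    · obtain ⟨v0, hv0B, hv0⟩ := hlow
      have hne : (B.filter (fun v => v < mn)).Nonempty := ⟨v0, Finset.mem_filter.mpr ⟨hv0B, hv0⟩⟩
      refine ⟨(B.filter (fun v => v < mn)).max' hne, mx,
        (Finset.mem_filter.mp (Finset.max'_mem _ hne)).1, hmxB, ?_, Or.inl ?_⟩
      · exact lt_of_lt_of_le (Finset.mem_filter.mp (Finset.max'_mem _ hne)).2 hmnmx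
      · intro z hzB
        constructor
        · rintro ⟨h1, h2⟩
          apply hcontig z hzB ?_ h2
          by_contra hc
          push_neg at hc
          have hzf : z ∈ B.filter (fun v => v < mn) := Finset.mem_filter.mpr ⟨hzB, hc⟩
          exact absurd (Finset.le_max' (B.filter (fun v => v < mn)) z hzf) (not_le.mpr h1)
        · intro hRz
          refine ⟨lt_of_lt_of_le (Finset.mem_filter.mp (Finset.max'_mem _ hne)).2 (hmnle z hRz),
            hmxle z hRz⟩
    · push_neg at hlow
      obtain ⟨u0, hu0B, hu0⟩ := hwprop
      have hu0mx : mx < u0 := by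
        rcases lt_or_ge mx u0 with h | h
        · exact h
        · exact absurd (hcontig u0 hu0B (hlow u0 hu0B) h) hu0
      have hBne : B.Nonempty := ⟨x0, self_mem_orbF⟩
      refine ⟨mx, B.max' hBne, hmxB, Finset.max'_mem _ _,
        lt_of_lt_of_le hu0mx (Finset.le_max' _ u0 hu0B), Or.inr ?_⟩
      intro z hzB
      constructor
      · rintro ⟨h1, _⟩ hRz
        exact absurd (hmxle z hRz) (not_le.mpr h1)
      · intro hRz
        constructor
        · rcases lt_or_ge mx z with h | h
          · exact h
          · exact absurd (hcontig z hzB (hlow z hzB) h) hRz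
        · exact Finset.le_max' _ z hzB
  -- perform the split
  obtain ⟨hAσ, hNσ⟩ := D_nice hσD
  have hscab : σ.SameCycle aa bb := (mem_orbF.mp haaB).symm.trans (mem_orbF.mp hbbB)
  have horbaa : orbF σ aa = B := (orbF_eq (mem_orbF.mp ((hB ▸ haaB : aa ∈ orbF σ x0)))).symm
  obtain ⟨hA'', hN'', hsc1, hsc2⟩ := split_lemma hAσ hNσ haabb hscab
  have hrlsplit : reflectionLength σ = reflectionLength (σ * Equiv.swap aa bb) + 1 :=
    rl_mul_swap_split (ne_of_lt haabb) hscab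
  have habsle : absLe (σ * Equiv.swap aa bb) σ := by
    unfold absLe
    rw [show (σ * Equiv.swap aa bb)⁻¹ * σ = (Equiv.swap aa bb)⁻¹ by group, Equiv.swap_inv,
      rl_swap (ne_of_lt haabb)]
    omega
  have hσ''D : absLe (σ * Equiv.swap aa bb) (finRotate (m+1)) := absLe_trans habsle hσD
  have hmemO1 : ∀ z, z ∈ O1 σ aa bb ↔ (z ∈ B ∧ (aa < z ∧ z ≤ bb)) := by
    intro z
    rw [mem_O1, horbaa]
  have hmemO2 : ∀ z, z ∈ O2 σ aa bb ↔ (z ∈ B ∧ ¬(aa < z ∧ z ≤ bb)) := by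
    intro z
    rw [mem_O2, horbaa]
  have href'' : ∀ x y, R x y → (σ * Equiv.swap aa bb).SameCycle x y := by
    intro x y hxy
    have hxsc : σ.SameCycle x y := href x y hxy
    by_cases hxB : x ∈ B
    · have hyB : y ∈ B := mem_orbF.mpr ((mem_orbF.mp hxB).trans hxsc)
      rcases hcase with hq | hcq
      · by_cases hRwx : R w x
        · have hRwy : R w y := htrans hRwx hxy
          exact hsc1 x y ((hmemO1 x).mpr ⟨hxB, (hq x hxB).mpr hRwx⟩)
            ((hmemO1 y).mpr ⟨hyB, (hq y hyB).mpr hRwy⟩)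
        · have hRwy : ¬ R w y := fun h => hRwx (htrans h (hsymm hxy))
          exact hsc2 x y ((hmemO2 x).mpr ⟨hxB, fun hpred => hRwx ((hq x hxB).mp hpred)⟩)
            ((hmemO2 y).mpr ⟨hyB, fun hpred => hRwy ((hq y hyB).mp hpred)⟩)
      · by_cases hRwx : R w x
        · have hRwy : R w y := htrans hRwx hxy
          exact hsc2 x y ((hmemO2 x).mpr ⟨hxB, fun hpred => (hcq x hxB).mp hpred hRwx⟩)
            ((hmemO2 y).mpr ⟨hyB, fun hpred => (hcq y hyB).mp hpred hRwy⟩)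
        · have hRwy : ¬ R w y := fun h => hRwx (htrans h (hsymm hxy))
          exact hsc1 x y ((hmemO1 x).mpr ⟨hxB, (hcq x hxB).mpr hRwx⟩)
            ((hmemO1 y).mpr ⟨hyB, (hcq y hyB).mpr hRwy⟩)
    · have hnxa : ¬ σ.SameCycle x aa := fun hc =>
        hxB (mem_orbF.mpr ((mem_orbF.mp haaB).trans hc.symm))
      exact (sc_untouched hscab hnxa).mpr hxsc
  obtain ⟨μ, h1, h2, h3⟩ := ih (reflectionLength (σ * Equiv.swap aa bb)) (by omega)
    (σ * Equiv.swap aa bb) rfl hσ''D href''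
  exact ⟨μ, h1, absLe_trans h2 habsle, h3⟩

lemma meet_exists {m : ℕ} {σ τ : Equiv.Perm (Fin (m+1))}
    (hσ : absLe σ (finRotate (m+1))) (hτ : absLe τ (finRotate (m+1))) :
    ∃ μ, absLe μ (finRotate (m+1)) ∧ absLe μ σ ∧ absLe μ τ ∧
      ∀ ν, absLe ν (finRotate (m+1)) → absLe ν σ → absLe ν τ → absLe ν μ := by
  obtain ⟨μ, h1, h2, h3⟩ := reach (fun x y => σ.SameCycle x y ∧ τ.SameCycle x y)
    (fun x => ⟨SameCycle.refl σ x, SameCycle.refl τ x⟩)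
    (fun h => ⟨h.1.symm, h.2.symm⟩)
    (fun h h' => ⟨h.1.trans h'.1, h.2.trans h'.2⟩)
    (fun p q r s h1 h2 h3 hpr hqs => ⟨(D_nice hσ).2 p q r s h1 h2 h3 hpr.1 hqs.1,
      (D_nice hτ).2 p q r s h1 h2 h3 hpr.2 hqs.2⟩)
    (reflectionLength σ) σ rfl hσ (fun x y h => h.1)
  refine ⟨μ, h1, h2, ?_, ?_⟩
  · exact absLe_of_refines h1 hτ (fun x y h => ((h3 x y).mp h).2)
  · intro ν hν hνσ hντ
    apply absLe_of_refines hν h1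
    intro x y h
    exact (h3 x y).mpr ⟨refine_of_absLe hνσ x y h, refine_of_absLe hντ x y h⟩

lemma glb_list {m : ℕ} : ∀ l : List (Equiv.Perm (Fin (m+1))),
    (∀ ν ∈ l, absLe ν (finRotate (m+1))) → l ≠ [] →
    ∃ μ, absLe μ (finRotate (m+1)) ∧ (∀ ν ∈ l, absLe μ ν) ∧
      ∀ ρ, absLe ρ (finRotate (m+1)) → (∀ ν ∈ l, absLe ρ ν) → absLe ρ μ := by
  intro l
  induction l with
  | nil => intro _ h; exact absurd rfl h
  | cons σ l' ih =>
    intro hl _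
    have hσD := hl σ List.mem_cons_self
    by_cases hl' : l' = []
    · subst hl'
      refine ⟨σ, hσD, ?_, ?_⟩
      · intro ν hν
        rcases List.mem_cons.mp hν with rfl | h
        · exact absLe_refl _
        · exact absurd h List.not_mem_nil
      · intro ρ _ hρ
        exact hρ _ List.mem_cons_self
    · obtain ⟨μ', hμ'1, hμ'2, hμ'3⟩ := ih (fun ν hν => hl ν (List.mem_cons_of_mem _ hν)) hl'
      obtain ⟨μ, h1, h2, h3, h4⟩ := meet_exists hσD hμ'1
      refine ⟨μ, h1, ?_, ?_⟩
      · intro ν hν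
        rcases List.mem_cons.mp hν with rfl | h
        · exact h2
        · exact absLe_trans h3 (hμ'2 ν h)
      · intro ρ hρD hρ
        exact h4 ρ hρD (hρ σ List.mem_cons_self)
          (hμ'3 ρ hρD (fun ν hν => hρ ν (List.mem_cons_of_mem _ hν)))

lemma join_exists {m : ℕ} {σ τ : Equiv.Perm (Fin (m+1))}
    (hσ : absLe σ (finRotate (m+1))) (hτ : absLe τ (finRotate (m+1))) :
    ∃ μ, absLe μ (finRotate (m+1)) ∧ absLe σ μ ∧ absLe τ μ ∧
      ∀ ν, absLe ν (finRotate (m+1)) → absLe σ ν → absLe τ ν → absLe μ ν := by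
  classical
  set U := Finset.univ.filter (fun ν : Equiv.Perm (Fin (m+1)) =>
    absLe ν (finRotate (m+1)) ∧ absLe σ ν ∧ absLe τ ν) with hU
  have hcU : finRotate (m+1) ∈ U := Finset.mem_filter.mpr
    ⟨Finset.mem_univ _, absLe_refl _, hσ, hτ⟩
  have hlne : U.toList ≠ [] := by
    intro hc
    have h := (Finset.mem_toList (s := U)).mpr hcU
    rw [hc] at h
    exact List.not_mem_nil h
  obtain ⟨μ, h1, h2, h3⟩ := glb_list U.toList (fun ν hν =>
    (Finset.mem_filter.mp (Finset.mem_toList.mp hν)).2.1) hlne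
  refine ⟨μ, h1, ?_, ?_, ?_⟩
  · exact h3 σ hσ (fun ν hν => (Finset.mem_filter.mp (Finset.mem_toList.mp hν)).2.2.1)
  · exact h3 τ hτ (fun ν hν => (Finset.mem_filter.mp (Finset.mem_toList.mp hν)).2.2.2)
  · intro ν hνD hσν hτν
    exact h2 ν (Finset.mem_toList.mpr (Finset.mem_filter.mpr
      ⟨Finset.mem_univ _, hνD, hσν, hτν⟩))

lemma absLe_zero (σ τ : Equiv.Perm (Fin 0)) : absLe σ τ := by
  have h : σ = τ := Equiv.ext (fun x => x.elim0)
  rw [h]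
  exact absLe_refl τ

end NCL


/-- The divisors of the Coxeter element `(1 2 … n)` in the reflection-length order form a
lattice: any two divisors have a least upper bound and a greatest lower bound among the
divisors. -/
theorem coxeterDivisors_lattice (n : ℕ) :
    (∀ σ ∈ coxeterDivisors n, ∀ τ ∈ coxeterDivisors n,
      ∃ μ ∈ coxeterDivisors n, absLe σ μ ∧ absLe τ μ ∧
        ∀ ν ∈ coxeterDivisors n, absLe σ ν → absLe τ ν → absLe μ ν) ∧
    (∀ σ ∈ coxeterDivisors n, ∀ τ ∈ coxeterDivisors n,
      ∃ μ ∈ coxeterDivisors n, absLe μ σ ∧ absLe μ τ ∧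
        ∀ ν ∈ coxeterDivisors n, absLe ν σ → absLe ν τ → absLe ν μ) := by
  cases n with
  | zero =>
    constructor
    · intro σ _ τ _
      exact ⟨σ, NCL.absLe_zero σ _, NCL.absLe_zero _ _, NCL.absLe_zero _ _,
        fun ν _ _ _ => NCL.absLe_zero _ _⟩
    · intro σ _ τ _
      exact ⟨σ, NCL.absLe_zero σ _, NCL.absLe_zero _ _, NCL.absLe_zero _ _,
        fun ν _ _ _ => NCL.absLe_zero _ _⟩
  | succ m =>
    constructor
    · intro σ hσ τ hτ
      obtain ⟨μ, h1, h2, h3, h4⟩ := NCL.join_exists hσ hτ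
      exact ⟨μ, h1, h2, h3, fun ν hν hσν hτν => h4 ν hν hσν hτν⟩
    · intro σ hσ τ hτ
      obtain ⟨μ, h1, h2, h3, h4⟩ := NCL.meet_exists hσ hτ
      exact ⟨μ, h1, h2, h3, fun ν hν ha hb => h4 ν hν ha hb⟩
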